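/- Fix a real α > 1. For an integer d ≥ 1, an integer t ≥ 0 and H_{d,α} = Σ_{k=1}^d k^{−α}, define r_d(t) = (1/H_{d,α}) · Σ_{k=1}^d k^{−α}(1 − k^{−α})^{2t}, and define r_∞(t) = (1/ζ(α)) · Σ_{k=1}^∞ k^{−α}(1 − k^{−α})^{2t}. Then: (i) for every integer t ≥ 0, lim_{d→∞} r_d(t) = r_∞(t); and (ii) lim_{t→∞} r_∞(t) · α·ζ(α) / B(1 − 1/α, 1 + 2t) = 1, where B is the Beta function and ζ the Riemann zeta function. -/

import Mathlib

open Filter Set MeasureTheory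

section GDProof
variable {α : ℝ}


private lemma phi_deriv (n : ℕ) (u : ℝ) :
    HasDerivAt (fun u : ℝ => u * (1 - u) ^ n)
      ((1 - u) ^ n + u * (n * (1 - u) ^ (n - 1) * (-1))) u := by
  have h1 : HasDerivAt (fun u : ℝ => (1 - u) ^ n) (n * (1 - u) ^ (n - 1) * (-1)) u := by
    have : HasDerivAt (fun u : ℝ => 1 - u) (-1) u := (hasDerivAt_id u).const_sub 1
    exact this.pow n
  exact ((hasDerivAt_id' u).mul h1).congr_deriv (by ring)

private lemma phi_mono (n : ℕ) (hn : 1 ≤ n) :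
    MonotoneOn (fun u : ℝ => u * (1 - u) ^ n) (Icc 0 (1 / (n + 1))) := by
  have hc : ContinuousOn (fun u : ℝ => u * (1 - u) ^ n) (Icc 0 (1 / (n + 1))) := by
    fun_prop
  refine monotoneOn_of_deriv_nonneg (convex_Icc _ _) hc (fun x hx => ((phi_deriv n x).differentiableAt).differentiableWithinAt) ?_
  intro x hx
  rw [interior_Icc] at hx
  rw [(phi_deriv n x).deriv]
  have h1 : (1 - x) ^ n = (1 - x) ^ (n - 1) * (1 - x) := by
    conv_lhs => rw [← Nat.sub_add_cancel hn, pow_succ]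
  have hx1 : x ≤ 1 / ((n : ℝ) + 1) := hx.2.le
  have hnn : (0:ℝ) < (n:ℝ) + 1 := by positivity
  have hxle : x * ((n:ℝ) + 1) ≤ 1 := by
    rw [le_div_iff₀ hnn] at hx1; linarith
  have h2 : (0:ℝ) ≤ 1 - x := by
    have : x ≤ 1 := le_trans hx1 (by rw [div_le_one hnn]; linarith [(Nat.one_le_cast.mpr hn : (1:ℝ) ≤ n)])
    linarith
  have key : (1 - x) ^ n + x * (n * (1 - x) ^ (n - 1) * (-1))
      = (1 - x) ^ (n - 1) * (1 - ((n:ℝ) + 1) * x) := by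
    rw [h1]; ring
  rw [key]
  have : (0:ℝ) ≤ 1 - ((n:ℝ) + 1) * x := by nlinarith
  positivity

private lemma phi_anti (n : ℕ) (hn : 1 ≤ n) :
    AntitoneOn (fun u : ℝ => u * (1 - u) ^ n) (Icc (1 / (n + 1)) 1) := by
  have hc : ContinuousOn (fun u : ℝ => u * (1 - u) ^ n) (Icc (1 / (n + 1)) 1) := by
    fun_prop
  refine antitoneOn_of_deriv_nonpos (convex_Icc _ _) hc (fun x hx => ((phi_deriv n x).differentiableAt).differentiableWithinAt) ?_
  intro x hx
  rw [interior_Icc] at hx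
  rw [(phi_deriv n x).deriv]
  have h1 : (1 - x) ^ n = (1 - x) ^ (n - 1) * (1 - x) := by
    conv_lhs => rw [← Nat.sub_add_cancel hn, pow_succ]
  have hnn : (0:ℝ) < (n:ℝ) + 1 := by positivity
  have h2 : (0:ℝ) ≤ 1 - x := by linarith [hx.2.le]
  have key : (1 - x) ^ n + x * (n * (1 - x) ^ (n - 1) * (-1))
      = (1 - x) ^ (n - 1) * (1 - ((n:ℝ) + 1) * x) := by
    rw [h1]; ring
  rw [key]
  have hgt : 1 / ((n:ℝ) + 1) < x := hx.1
  have : 1 - ((n:ℝ) + 1) * x ≤ 0 := by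
    rw [div_lt_iff₀ hnn] at hgt; nlinarith
  have h3 : (0:ℝ) ≤ (1 - x) ^ (n - 1) := by positivity
  nlinarith

private lemma phi_bound (n : ℕ) (hn : 1 ≤ n) {u : ℝ} (hu : u ∈ Icc (0:ℝ) 1) :
    u * (1 - u) ^ n ≤ 1 / (n + 1) := by
  have hnn : (0:ℝ) < (n:ℝ) + 1 := by positivity
  have hcmem : (1 / ((n:ℝ) + 1)) ∈ Icc (0:ℝ) 1 := by
    constructor
    · positivity
    · rw [div_le_one hnn]; linarith [(Nat.one_le_cast.mpr hn : (1:ℝ) ≤ n)]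
  have hφc : (1 / ((n:ℝ) + 1)) * (1 - 1 / ((n:ℝ)+1)) ^ n ≤ 1 / ((n:ℝ) + 1) := by
    have h1 : (0:ℝ) ≤ 1 - 1/((n:ℝ)+1) := by linarith [hcmem.2]
    have h2 : (1 - 1/((n:ℝ)+1)) ^ n ≤ 1 := pow_le_one₀ h1 (by linarith [hcmem.1])
    calc (1 / ((n:ℝ) + 1)) * (1 - 1 / ((n:ℝ)+1)) ^ n ≤ (1 / ((n:ℝ)+1)) * 1 :=
          mul_le_mul_of_nonneg_left h2 (by positivity)
      _ = 1 / ((n:ℝ)+1) := mul_one _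
  rcases le_total u (1 / ((n:ℝ)+1)) with h | h
  · exact le_trans (phi_mono n hn ⟨hu.1, h⟩ ⟨by positivity, le_refl _⟩ h) hφc
  · exact le_trans (phi_anti n hn ⟨le_refl _, hcmem.2⟩ ⟨h, hu.2⟩ h) hφc



section F
variable (n : ℕ)

private lemma u_mem {x : ℝ} (hx : 1 ≤ x) (hα : 1 < α) : x ^ (-α) ∈ Icc (0:ℝ) 1 :=
  ⟨(Real.rpow_pos_of_pos (by linarith) _).le,
   Real.rpow_le_one_of_one_le_of_nonpos hx (by linarith)⟩

private lemma X_pow (hα : 1 < α) : (((n:ℝ) + 1) ^ (1/α)) ^ (-α) = 1 / ((n:ℝ) + 1) := by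
  have hpos : (0:ℝ) < (n:ℝ) + 1 := by positivity
  rw [← Real.rpow_mul hpos.le]
  have : 1 / α * (-α) = -1 := by field_simp
  rw [this, Real.rpow_neg_one]
  exact (one_div _).symm

private lemma f_bound (hn : 1 ≤ n) (hα : 1 < α) {x : ℝ} (hx : 1 ≤ x) :
    x ^ (-α) * (1 - x ^ (-α)) ^ n ≤ 1 / ((n:ℝ) + 1) :=
  phi_bound n hn (u_mem hx hα)

private lemma f_nonneg (hα : 1 < α) {x : ℝ} (hx : 1 ≤ x) :
    0 ≤ x ^ (-α) * (1 - x ^ (-α)) ^ n := by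
  have h := u_mem (α := α) hx hα
  have : (0:ℝ) ≤ 1 - x ^ (-α) := by linarith [h.2]
  positivity

private lemma f_mono (hn : 1 ≤ n) (hα : 1 < α) :
    MonotoneOn (fun x : ℝ => x ^ (-α) * (1 - x ^ (-α)) ^ n)
      (Icc 1 (((n:ℝ) + 1) ^ (1/α))) := by
  intro x hx y hy hxy
  have hx1 : (1:ℝ) ≤ x := hx.1
  have hy1 : (1:ℝ) ≤ y := hy.1
  have huyx : y ^ (-α) ≤ x ^ (-α) :=
    Real.rpow_le_rpow_of_nonpos (by linarith) hxy (by linarith)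
  have hXy : (((n:ℝ) + 1) ^ (1/α)) ^ (-α) ≤ y ^ (-α) :=
    Real.rpow_le_rpow_of_nonpos (by linarith) hy.2 (by linarith)
  rw [X_pow n hα] at hXy
  have hux : x ^ (-α) ∈ Icc (1 / ((n:ℝ)+1)) 1 := ⟨le_trans hXy huyx, (u_mem hx1 hα).2⟩
  have huy : y ^ (-α) ∈ Icc (1 / ((n:ℝ)+1)) 1 := ⟨hXy, (u_mem hy1 hα).2⟩
  exact phi_anti n hn huy hux huyx

private lemma f_anti (hn : 1 ≤ n) (hα : 1 < α) :
    AntitoneOn (fun x : ℝ => x ^ (-α) * (1 - x ^ (-α)) ^ n)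
      (Ici (((n:ℝ) + 1) ^ (1/α))) := by
  intro x hx y hy hxy
  have hX1 : (1:ℝ) ≤ ((n:ℝ) + 1) ^ (1/α) :=
    Real.one_le_rpow (by push_cast; linarith [(Nat.one_le_cast.mpr hn : (1:ℝ) ≤ n)]) (by positivity)
  have hx1 : (1:ℝ) ≤ x := le_trans hX1 hx
  have hy1 : (1:ℝ) ≤ y := le_trans hX1 hy
  have huyx : y ^ (-α) ≤ x ^ (-α) :=
    Real.rpow_le_rpow_of_nonpos (by linarith) hxy (by linarith)
  have hxX : x ^ (-α) ≤ (((n:ℝ) + 1) ^ (1/α)) ^ (-α) :=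
    Real.rpow_le_rpow_of_nonpos (by linarith) hx (by linarith)
  rw [X_pow n hα] at hxX
  have hux : x ^ (-α) ∈ Icc (0:ℝ) (1 / ((n:ℝ)+1)) := ⟨(u_mem hx1 hα).1, hxX⟩
  have huy : y ^ (-α) ∈ Icc (0:ℝ) (1 / ((n:ℝ)+1)) := ⟨(u_mem hy1 hα).1, le_trans huyx hxX⟩
  exact phi_mono n hn huy hux huyx

private lemma f_contOn (hα : 1 < α) :
    ContinuousOn (fun x : ℝ => x ^ (-α) * (1 - x ^ (-α)) ^ n) (Ici (1:ℝ)) := by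
  have h : ContinuousOn (fun x : ℝ => x ^ (-α)) (Ici (1:ℝ)) := by
    apply ContinuousOn.rpow_const continuousOn_id
    intro x hx; left; exact ne_of_gt (lt_of_lt_of_le one_pos hx)
  exact h.mul ((continuousOn_const.sub h).pow n)

end F




private lemma f_integrableOn (n : ℕ) (hα : 1 < α) :
    IntegrableOn (fun x : ℝ => x ^ (-α) * (1 - x ^ (-α)) ^ n) (Ioi (1:ℝ)) := by
  have hb : IntegrableOn (fun x : ℝ => x ^ (-α)) (Ioi (1:ℝ)) :=
    integrableOn_Ioi_rpow_of_lt (by linarith) one_pos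
  refine Integrable.mono' hb ?_ ?_
  · exact ((f_contOn n hα).mono Ioi_subset_Ici_self).aestronglyMeasurable measurableSet_Ioi
  · filter_upwards [ae_restrict_mem measurableSet_Ioi] with x hx
    have hx1 : (1:ℝ) ≤ x := le_of_lt hx
    have hu0 : (0:ℝ) < x ^ (-α) := Real.rpow_pos_of_pos (by linarith) _
    have hu1 : x ^ (-α) ≤ 1 := Real.rpow_le_one_of_one_le_of_nonpos hx1 (by linarith)
    have h1 : (0:ℝ) ≤ (1 - x ^ (-α)) ^ n := pow_nonneg (by linarith) n
    have h2 : (1 - x ^ (-α)) ^ n ≤ 1 := pow_le_one₀ (by linarith) (by linarith)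
    rw [Real.norm_eq_abs, abs_of_nonneg (by positivity)]
    calc x ^ (-α) * (1 - x ^ (-α)) ^ n ≤ x ^ (-α) * 1 :=
          mul_le_mul_of_nonneg_left h2 hu0.le
      _ = x ^ (-α) := mul_one _

-- image of Ioi 1 under x ↦ x^(-α)
private lemma image_rpow_neg (hα : 1 < α) :
    (fun x : ℝ => x ^ (-α)) '' (Ioi 1) = Ioo (0:ℝ) 1 := by
  ext z
  constructor
  · rintro ⟨x, hx, rfl⟩
    have hx1 : (1:ℝ) < x := hx
    refine ⟨Real.rpow_pos_of_pos (by linarith) _, ?_⟩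
    calc x ^ (-α) < 1 ^ (-α) := by
          apply Real.rpow_lt_rpow_of_neg one_pos hx1 (by linarith)
      _ = 1 := Real.one_rpow _
  · rintro ⟨hz0, hz1⟩
    refine ⟨z ^ (-1/α), ?_, ?_⟩
    · show (1:ℝ) < z ^ (-1/α)
      calc (1:ℝ) = 1 ^ (-1/α) := (Real.one_rpow _).symm
        _ < z ^ (-1/α) := Real.rpow_lt_rpow_of_neg hz0 hz1 (by
            rw [neg_div]; exact neg_neg_iff_pos.mpr (by positivity))
    · show (z ^ (-1/α)) ^ (-α) = z
      rw [← Real.rpow_mul hz0.le]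
      have : -1/α * (-α) = 1 := by field_simp
      rw [this, Real.rpow_one]

private lemma change_of_var (n : ℕ) (hα : 1 < α) :
    ∫ z in Ioo (0:ℝ) 1, z ^ (-(1/α)) * (1 - z) ^ n
      = ∫ x in Ioi (1:ℝ), α * (x ^ (-α) * (1 - x ^ (-α)) ^ n) := by
  have hα0 : (0:ℝ) < α := by linarith
  have hderiv : ∀ x ∈ Ioi (1:ℝ), HasDerivWithinAt (fun x : ℝ => x ^ (-α))
      (-α * x ^ (-α - 1)) (Ioi 1) x := by
    intro x hx
    exact ((Real.hasDerivAt_rpow_const (Or.inl (lt_trans one_pos hx).ne')).hasDerivWithinAt)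
  have hinj : InjOn (fun x : ℝ => x ^ (-α)) (Ioi 1) := by
    intro x hx y hy hxy
    have : StrictAntiOn (fun x : ℝ => x ^ (-α)) (Ioi 1) := by
      intro a ha b hb hab
      exact Real.rpow_lt_rpow_of_neg (lt_trans one_pos ha) hab (by linarith)
    exact this.injOn hx hy hxy
  have := MeasureTheory.integral_image_eq_integral_abs_deriv_smul measurableSet_Ioi hderiv hinj
    (fun z => z ^ (-(1/α)) * (1 - z) ^ n)
  rw [image_rpow_neg hα] at this
  rw [this]
  apply setIntegral_congr_fun measurableSet_Ioi
  intro x hx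
  have hx0 : (0:ℝ) < x := lt_trans one_pos hx
  have h1 : |(-α) * x ^ (-α - 1)| = α * x ^ (-α - 1) := by
    rw [abs_mul, abs_neg, abs_of_pos hα0, abs_of_pos (Real.rpow_pos_of_pos hx0 _)]
  have h2 : (x ^ (-α)) ^ (-(1/α)) = x := by
    rw [← Real.rpow_mul hx0.le]
    have : -α * -(1/α) = 1 := by field_simp
    rw [this, Real.rpow_one]
  show |(-α) * x ^ (-α - 1)| • ((x ^ (-α)) ^ (-(1/α)) * (1 - x ^ (-α)) ^ n)
      = α * (x ^ (-α) * (1 - x ^ (-α)) ^ n)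
  rw [smul_eq_mul, h1, h2]
  have h3 : x ^ (-α - 1) * x = x ^ (-α) := by
    rw [← Real.rpow_add_one hx0.ne']; norm_num
  calc α * x ^ (-α - 1) * (x * (1 - x ^ (-α)) ^ n)
      = α * ((x ^ (-α - 1) * x) * (1 - x ^ (-α)) ^ n) := by ring
    _ = α * (x ^ (-α) * (1 - x ^ (-α)) ^ n) := by rw [h3]




private lemma zeta_re (hα : 1 < α) :
    (riemannZeta (α:ℂ)).re = ∑' k : ℕ, ((k:ℝ)+1) ^ (-α) := by
  have h := zeta_eq_tsum_one_div_nat_add_one_cpow (s := (α:ℂ)) (by simpa using hα)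
  have hterm : ∀ n : ℕ, (1 : ℂ)/((n:ℂ)+1) ^ (α:ℂ) = ((((n:ℝ)+1) ^ (-α) : ℝ) : ℂ) := by
    intro n
    have hpos : (0:ℝ) < (n:ℝ)+1 := by positivity
    rw [show ((n:ℂ)+1) = (((n:ℝ)+1 : ℝ) : ℂ) by push_cast; ring,
      ← Complex.ofReal_cpow hpos.le]
    rw [Real.rpow_neg hpos.le, ← one_div]
    push_cast
    ring
  rw [h]
  have : (∑' n : ℕ, (1 : ℂ)/((n:ℂ)+1) ^ (α:ℂ)) = ((∑' k : ℕ, ((k:ℝ)+1) ^ (-α) : ℝ) : ℂ) := by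
    rw [Complex.ofReal_tsum]
    exact tsum_congr hterm
  rw [this, Complex.ofReal_re]

private lemma summable_base (hα : 1 < α) : Summable (fun k : ℕ => ((k:ℝ)+1) ^ (-α)) := by
  have := (Real.summable_nat_rpow (p := -α)).mpr (by linarith)
  have h2 := (summable_nat_add_iff 1).mpr this
  refine h2.congr fun k => ?_
  push_cast; ring_nf

private lemma zeta_re_pos (hα : 1 < α) : 0 < (riemannZeta (α:ℂ)).re := by
  rw [zeta_re hα]
  have := (summable_base hα).le_tsum 0 (fun i _ => (Real.rpow_pos_of_pos (by positivity) _).le)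
  norm_num at this
  linarith

private lemma part_one (hα : 1 < α) (t : ℕ) :
    Tendsto (fun d : ℕ =>
      (∑ k ∈ Finset.Icc 1 d, (k:ℝ) ^ (-α) * (1 - (k:ℝ) ^ (-α)) ^ (2*t)) /
        (∑ k ∈ Finset.Icc 1 d, (k:ℝ) ^ (-α))) atTop
      (nhds ((∑' k : ℕ, ((k:ℝ)+1) ^ (-α) * (1 - ((k:ℝ)+1) ^ (-α)) ^ (2*t)) /
        (riemannZeta (α:ℂ)).re)) := by
  set b : ℕ → ℝ := fun k => ((k:ℝ)+1) ^ (-α) with hb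
  set g : ℕ → ℝ := fun k => ((k:ℝ)+1) ^ (-α) * (1 - ((k:ℝ)+1) ^ (-α)) ^ (2*t) with hg
  have hbs : Summable b := summable_base hα
  have hg0 : ∀ k, 0 ≤ g k := by
    intro k
    have h1 : ((k:ℝ)+1) ^ (-α) ≤ 1 :=
      Real.rpow_le_one_of_one_le_of_nonpos (by linarith [(Nat.cast_nonneg k : (0:ℝ) ≤ k)]) (by linarith)
    have h2 : (0:ℝ) ≤ ((k:ℝ)+1) ^ (-α) := (Real.rpow_pos_of_pos (by positivity) _).le
    have : (0:ℝ) ≤ (1 - ((k:ℝ)+1) ^ (-α)) ^ (2*t) := pow_nonneg (by linarith) _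
    positivity
  have hgs : Summable g := by
    refine Summable.of_nonneg_of_le hg0 (fun k => ?_) hbs
    have h1 : ((k:ℝ)+1) ^ (-α) ≤ 1 :=
      Real.rpow_le_one_of_one_le_of_nonpos (by linarith [(Nat.cast_nonneg k : (0:ℝ) ≤ k)]) (by linarith)
    have h2 : (0:ℝ) ≤ ((k:ℝ)+1) ^ (-α) := (Real.rpow_pos_of_pos (by positivity) _).le
    have h3 : (1 - ((k:ℝ)+1) ^ (-α)) ^ (2*t) ≤ 1 := pow_le_one₀ (by linarith) (by linarith)
    calc g k ≤ ((k:ℝ)+1) ^ (-α) * 1 := mul_le_mul_of_nonneg_left h3 h2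
      _ = b k := mul_one _
  have hicc : ∀ (h : ℕ → ℝ) (d : ℕ),
      (∑ k ∈ Finset.Icc 1 d, h k) = ∑ i ∈ Finset.range d, h (i+1) := by
    intro h d
    have : Finset.Icc 1 d = Finset.Ico 1 (d+1) := by
      rw [Finset.Ico_add_one_right_eq_Icc]
    rw [this, Finset.sum_Ico_eq_sum_range]
    simp [add_comm]
  have hH : Tendsto (fun d : ℕ => ∑ k ∈ Finset.Icc 1 d, (k:ℝ) ^ (-α)) atTop
      (nhds ((riemannZeta (α:ℂ)).re)) := by
    rw [zeta_re hα]
    have := hbs.hasSum.tendsto_sum_nat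
    refine this.congr fun d => ?_
    rw [hicc (fun k => (k:ℝ) ^ (-α)) d]
    refine (Finset.sum_congr rfl fun i _ => ?_)
    simp only [hb]; push_cast; ring_nf
  have hN : Tendsto (fun d : ℕ => ∑ k ∈ Finset.Icc 1 d, (k:ℝ) ^ (-α) * (1 - (k:ℝ) ^ (-α)) ^ (2*t))
      atTop (nhds (∑' k : ℕ, g k)) := by
    have := hgs.hasSum.tendsto_sum_nat
    refine this.congr fun d => ?_
    rw [hicc (fun k => (k:ℝ) ^ (-α) * (1 - (k:ℝ) ^ (-α)) ^ (2*t)) d]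
    refine (Finset.sum_congr rfl fun i _ => ?_)
    simp only [hg]; push_cast; ring_nf
  exact hN.div hH (ne_of_gt (zeta_re_pos hα))




private lemma sum_sub_integral (n : ℕ) (hn : 1 ≤ n) (hα : 1 < α) :
    |(∑' k : ℕ, ((k:ℝ)+1) ^ (-α) * (1 - ((k:ℝ)+1) ^ (-α)) ^ n)
      - ∫ x in Ioi (1:ℝ), x ^ (-α) * (1 - x ^ (-α)) ^ n| ≤ 2 / ((n:ℝ)+1) := by
  set f : ℝ → ℝ := fun x => x ^ (-α) * (1 - x ^ (-α)) ^ n with hf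
  set g : ℕ → ℝ := fun k => f ((k:ℝ)+1) with hg
  set X : ℝ := ((n:ℝ) + 1) ^ (1/α) with hX
  have hX1 : (1:ℝ) ≤ X := Real.one_le_rpow (by push_cast; linarith) (by positivity)
  set m : ℕ := ⌊X⌋₊ with hm
  have hm1 : 1 ≤ m := by
    rw [hm]; exact Nat.le_floor (by exact_mod_cast hX1)
  have hmX : (m:ℝ) ≤ X := Nat.floor_le (by linarith)
  have hXm1 : X ≤ (m:ℝ) + 1 := (Nat.lt_floor_add_one X).le
  have hm1R : (1:ℝ) ≤ (m:ℝ) := by exact_mod_cast hm1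
  -- nonnegativity of g
  have hg0 : ∀ k : ℕ, 0 ≤ g k := fun k => f_nonneg n hα (by push_cast; linarith [Nat.cast_nonneg (α := ℝ) k])
  -- summability
  have hsum : Summable g := by
    have hb : Summable (fun k : ℕ => ((k:ℝ)+1) ^ (-α)) := by
      have := (Real.summable_nat_rpow (p := -α)).mpr (by linarith)
      have h2 := (summable_nat_add_iff 1).mpr this
      refine h2.congr fun k => ?_
      push_cast; ring_nf
    refine Summable.of_nonneg_of_le hg0 (fun k => ?_) hb
    have hk1 : (1:ℝ) ≤ (k:ℝ)+1 := by linarith [Nat.cast_nonneg (α := ℝ) k]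
    have hu0 : (0:ℝ) < ((k:ℝ)+1) ^ (-α) := Real.rpow_pos_of_pos (by linarith) _
    have hu1 : ((k:ℝ)+1) ^ (-α) ≤ 1 := Real.rpow_le_one_of_one_le_of_nonpos hk1 (by linarith)
    have h2 : (1 - ((k:ℝ)+1) ^ (-α)) ^ n ≤ 1 := pow_le_one₀ (by linarith) (by linarith)
    calc g k ≤ ((k:ℝ)+1) ^ (-α) * 1 := mul_le_mul_of_nonneg_left h2 hu0.le
      _ = _ := mul_one _
  -- interval integrability on [a,b] ⊆ [1,∞)
  have hII : ∀ a b : ℝ, 1 ≤ a → a ≤ b → IntervalIntegrable f volume a b := by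
    intro a b ha hab
    apply ((f_contOn n hα).mono ?_).intervalIntegrable
    rw [uIcc_of_le hab]
    exact fun x hx => le_trans ha hx.1
  -- pieces
  set I1 : ℝ := ∫ x in (1:ℝ)..(m:ℝ), f x with hI1
  set Imid : ℝ := ∫ x in (m:ℝ)..((m:ℝ)+1), f x with hImid
  set Itail : ℝ := ∫ x in Ioi ((m:ℝ)+1), f x with hItail
  have htail_int : IntegrableOn f (Ioi ((m:ℝ)+1)) :=
    (f_integrableOn n hα).mono_set (Ioi_subset_Ioi (by linarith))
  -- integral split
  have hIsplit : ∫ x in Ioi (1:ℝ), f x = I1 + Imid + Itail := by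
    have hdisj : Disjoint (Ioc (1:ℝ) ((m:ℝ)+1)) (Ioi ((m:ℝ)+1)) :=
      Ioc_disjoint_Ioi le_rfl
    have hunion : Ioc (1:ℝ) ((m:ℝ)+1) ∪ Ioi ((m:ℝ)+1) = Ioi (1:ℝ) :=
      Ioc_union_Ioi_eq_Ioi (by linarith)
    have h1 : IntegrableOn f (Ioc (1:ℝ) ((m:ℝ)+1)) :=
      (f_integrableOn n hα).mono_set Ioc_subset_Ioi_self
    rw [← hunion, setIntegral_union hdisj measurableSet_Ioi h1 htail_int]
    congr 1
    rw [← intervalIntegral.integral_of_le (by linarith),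
      ← intervalIntegral.integral_add_adjacent_intervals (hII 1 m le_rfl hm1R) (hII m ((m:ℝ)+1) hm1R (by linarith))]
  -- sum split
  have hSsplit := Summable.sum_add_tsum_nat_add (f := g) m hsum
  set A : ℝ := ∑ i ∈ Finset.range m, g i with hA
  set T : ℝ := ∑' k : ℕ, g (k + m) with hT
  -- bounds on boundary values
  have hfm : f (m:ℝ) ≤ 1 / ((n:ℝ)+1) := f_bound n hn hα hm1R
  have hfm1 : f ((m:ℝ)+1) ≤ 1 / ((n:ℝ)+1) := f_bound n hn hα (by linarith)
  -- A bounds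
  have hmono : MonotoneOn f (Icc (1:ℝ) (1 + ((m-1:ℕ):ℝ))) := by
    apply (f_mono n hn hα).mono
    apply Icc_subset_Icc le_rfl
    rw [Nat.cast_sub hm1]; push_cast; linarith
  have hcastm : (1:ℝ) + ((m-1:ℕ):ℝ) = (m:ℝ) := by
    rw [Nat.cast_sub hm1]; push_cast; ring
  have hAub : A ≤ I1 + 1 / ((n:ℝ)+1) := by
    have h0 := hmono.sum_le_integral (x₀ := (1:ℝ)) (a := m - 1)
    rw [hcastm] at h0
    have hre : A = (∑ i ∈ Finset.range (m-1), g i) + g (m-1) := by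
      have h := Finset.sum_range_succ g (m-1)
      rw [Nat.sub_add_cancel hm1] at h
      rw [hA, h]
    have he1 : (∑ i ∈ Finset.range (m-1), g i) = ∑ i ∈ Finset.range (m-1), f (1 + (i:ℕ)) := by
      refine Finset.sum_congr rfl fun i _ => ?_
      show f ((i:ℝ)+1) = f (1 + (i:ℝ))
      ring_nf
    have hgm : g (m-1) = f (m:ℝ) := by
      show f (((m-1:ℕ):ℝ)+1) = f (m:ℝ)
      congr 1
      rw [Nat.cast_sub hm1]; push_cast; ring
    rw [hre, he1, hgm]
    exact add_le_add h0 hfm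
  have hAlb : I1 ≤ A := by
    have h0 := hmono.integral_le_sum (x₀ := (1:ℝ)) (a := m - 1)
    rw [hcastm] at h0
    have hre : A = g 0 + ∑ i ∈ Finset.range (m-1), g (i+1) := by
      have h := Finset.sum_range_succ' g (m-1)
      rw [Nat.sub_add_cancel hm1] at h
      rw [hA, h]; ring
    have hg0' : g 0 = 0 := by
      simp only [hg, hf, Nat.cast_zero, zero_add, Real.one_rpow, sub_self]
      rw [zero_pow (by omega : n ≠ 0)]
      ring
    have he1 : (∑ i ∈ Finset.range (m-1), g (i+1)) = ∑ i ∈ Finset.range (m-1), f (1 + ((i+1:ℕ):ℝ)) := by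
      refine Finset.sum_congr rfl fun i _ => ?_
      show f (((i+1:ℕ):ℝ)+1) = f (1 + ((i+1:ℕ):ℝ))
      ring_nf
    rw [hre, hg0', he1, zero_add]
    exact h0
  -- antitone on tail
  have hanti : ∀ a : ℕ, AntitoneOn f (Icc ((m:ℝ)+1) ((m:ℝ)+1+a)) := by
    intro a
    apply (f_anti n hn hα).mono
    intro x hx
    exact le_trans hXm1 hx.1
  -- T upper bound
  have hTsplit := Summable.tsum_eq_zero_add (f := fun k : ℕ => g (k + m)) (by
    exact (summable_nat_add_iff m).mpr hsum)
  have hgm1 : g m = f ((m:ℝ)+1) := rfl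
  have hT'ub : (∑' k : ℕ, g (k + 1 + m)) ≤ Itail := by
    apply Real.tsum_le_of_sum_range_le (fun k => hg0 _)
    intro a
    have h0 := (hanti a).sum_le_integral (x₀ := (m:ℝ)+1) (a := a)
    have he1 : (∑ i ∈ Finset.range a, g (i + 1 + m)) = ∑ i ∈ Finset.range a, f ((m:ℝ)+1 + ((i+1:ℕ):ℝ)) := by
      refine Finset.sum_congr rfl fun i _ => ?_
      simp only [hg]
      congr 1; push_cast; ring
    rw [he1]
    refine le_trans h0 ?_
    rw [intervalIntegral.integral_of_le (le_add_of_nonneg_right (Nat.cast_nonneg a))]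
    apply setIntegral_mono_set htail_int
    · filter_upwards [ae_restrict_mem measurableSet_Ioi] with x hx
      exact f_nonneg n hα (by linarith [mem_Ioi.mp hx])
    · exact HasSubset.Subset.eventuallyLE Ioc_subset_Ioi_self
  have hTub : T ≤ 1 / ((n:ℝ)+1) + Itail := by
    have h1 : T = g m + ∑' k : ℕ, g (k + 1 + m) := by
      rw [hT]; simpa using hTsplit
    rw [h1]
    exact add_le_add (hgm1 ▸ hfm1) hT'ub
  -- T lower bound
  have hTlb : Itail ≤ T := by
    have hlim : Tendsto (fun a : ℕ => ∫ x in ((m:ℝ)+1)..((m:ℝ)+1+a), f x) atTop (nhds Itail) := by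
      apply intervalIntegral_tendsto_integral_Ioi _ htail_int
      exact tendsto_atTop_add_const_left _ _ tendsto_natCast_atTop_atTop
    refine le_of_tendsto hlim (Eventually.of_forall fun a => ?_)
    have h0 := (hanti a).integral_le_sum (x₀ := (m:ℝ)+1) (a := a)
    refine le_trans h0 ?_
    have he1 : (∑ i ∈ Finset.range a, f ((m:ℝ)+1 + (i:ℕ))) = ∑ i ∈ Finset.range a, g (i + m) := by
      refine Finset.sum_congr rfl fun i _ => ?_
      simp only [hg]
      congr 1; push_cast; ring
    rw [he1]
    exact Summable.sum_le_tsum _ (fun k _ => hg0 _) ((summable_nat_add_iff m).mpr hsum)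
  -- Imid bounds
  have hImid0 : 0 ≤ Imid := by
    rw [hImid]
    apply intervalIntegral.integral_nonneg (by linarith)
    intro x hx
    exact f_nonneg n hα (le_trans hm1R hx.1)
  have hImidub : Imid ≤ 1 / ((n:ℝ)+1) := by
    have h0 : Imid ≤ ∫ _ in (m:ℝ)..((m:ℝ)+1), 1 / ((n:ℝ)+1) := by
      apply intervalIntegral.integral_mono_on (by linarith) (hII m ((m:ℝ)+1) hm1R (by linarith))
        intervalIntegrable_const
      intro x hx
      exact f_bound n hn hα (le_trans hm1R hx.1)
    simpa using h0
  -- conclude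
  have hS : (∑' k : ℕ, g k) = A + T := hSsplit.symm
  show |(∑' k : ℕ, g k) - ∫ x in Ioi (1:ℝ), f x| ≤ 2 / ((n:ℝ)+1)
  rw [hS, hIsplit]
  have h3 : 1 / ((n:ℝ)+1) + 1 / ((n:ℝ)+1) = 2 / ((n:ℝ)+1) := by ring
  have h4 : (0:ℝ) ≤ 1 / ((n:ℝ)+1) := by positivity
  rw [abs_le]
  constructor
  · linarith
  · linarith




private lemma beta_II (hα : 1 < α) (t : ℕ) (a c : ℝ) :
    IntervalIntegrable (fun z : ℝ => z ^ (-(1/α)) * (1-z) ^ (2*t)) volume a c := by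
  have h1 : IntervalIntegrable (fun z : ℝ => z ^ (-(1/α))) volume a c := by
    apply intervalIntegral.intervalIntegrable_rpow'
    have : 1/α < 1 := by
      rw [div_lt_one (by linarith)]; linarith
    linarith
  exact h1.mul_continuousOn (Continuous.continuousOn (by continuity))

private lemma beta_lb (hα : 1 < α) (t : ℕ) (ht : 1 ≤ t) :
    (1/2) * (4*(t:ℝ)) ^ (1/α - 1) ≤ ∫ z in (0:ℝ)..1, z ^ (-(1/α)) * (1-z) ^ (2*t) := by
  have htR : (1:ℝ) ≤ (t:ℝ) := by exact_mod_cast ht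
  set c : ℝ := 1 / (4*(t:ℝ)) with hc
  have hc0 : 0 < c := by positivity
  have hc1 : c ≤ 1 := by
    rw [hc, div_le_one (by linarith)]; linarith
  have h1α : 0 < 1/α := by positivity
  have h1α1 : 1/α < 1 := by rw [div_lt_one (by linarith)]; linarith
  have hsplit : (∫ z in (0:ℝ)..1, z ^ (-(1/α)) * (1-z) ^ (2*t))
      = (∫ z in (0:ℝ)..c, z ^ (-(1/α)) * (1-z) ^ (2*t))
        + ∫ z in c..1, z ^ (-(1/α)) * (1-z) ^ (2*t) :=
    (intervalIntegral.integral_add_adjacent_intervals (beta_II hα t 0 c) (beta_II hα t c 1)).symm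
  have hpos2 : 0 ≤ ∫ z in c..1, z ^ (-(1/α)) * (1-z) ^ (2*t) := by
    apply intervalIntegral.integral_nonneg hc1
    intro x hx
    have h1 : (0:ℝ) ≤ x ^ (-(1/α)) := Real.rpow_nonneg (le_trans hc0.le hx.1) _
    have h2 : (0:ℝ) ≤ (1-x) ^ (2*t) := Even.pow_nonneg (even_two_mul t) _
    positivity
  have hrint : IntervalIntegrable (fun z : ℝ => z ^ (-(1/α))) volume 0 c := by
    apply intervalIntegral.intervalIntegrable_rpow'; linarith
  have hlow : (∫ z in (0:ℝ)..c, (1/2) * z ^ (-(1/α)))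
      ≤ ∫ z in (0:ℝ)..c, z ^ (-(1/α)) * (1-z) ^ (2*t) := by
    apply intervalIntegral.integral_mono_on hc0.le (hrint.const_mul (1/2)) (beta_II hα t 0 c)
    intro x hx
    have hx0 : 0 ≤ x := hx.1
    have hberno : 1 + ((2*t:ℕ):ℝ) * (-x) ≤ (1 + (-x)) ^ (2*t) := by
      apply one_add_mul_le_pow
      have : x ≤ 1 := le_trans hx.2 hc1
      linarith
    push_cast at hberno
    have hcx : (2*t:ℝ) * x ≤ 1/2 := by
      have h2tc : (2*t:ℝ) * c = 1/2 := by
        rw [hc]; field_simp; ring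
      calc (2*t:ℝ) * x ≤ (2*t:ℝ) * c := by
            apply mul_le_mul_of_nonneg_left hx.2 (by positivity)
        _ = 1/2 := h2tc
    have hhalf : (1:ℝ)/2 ≤ (1-x) ^ (2*t) := by
      have : (1 + (-x)) = 1 - x := by ring
      rw [this] at hberno
      nlinarith
    have h1 : (0:ℝ) ≤ x ^ (-(1/α)) := Real.rpow_nonneg hx0 _
    calc (1/2) * x ^ (-(1/α)) = x ^ (-(1/α)) * (1/2) := by ring
      _ ≤ x ^ (-(1/α)) * (1-x) ^ (2*t) := mul_le_mul_of_nonneg_left hhalf h1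
  have hz : (0:ℝ) ^ (-(1/α) + 1) = 0 := Real.zero_rpow (ne_of_gt (by linarith))
  have hcomp : (∫ z in (0:ℝ)..c, (1/2) * z ^ (-(1/α)))
      = (1/2) * ((c ^ (-(1/α) + 1) - 0 ^ (-(1/α) + 1)) / (-(1/α) + 1)) := by
    rw [intervalIntegral.integral_const_mul, integral_rpow (Or.inl (by linarith))]
  rw [hz, sub_zero] at hcomp
  have hcval : c ^ (-(1/α) + 1) = (4*(t:ℝ)) ^ (1/α - 1) := by
    rw [hc, one_div, Real.inv_rpow (by positivity), ← Real.rpow_neg (by positivity)]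
    ring_nf
  have hd0 : 0 < -(1/α) + 1 := by linarith
  have hd1 : -(1/α) + 1 ≤ 1 := by linarith
  have hv0 : 0 < (4*(t:ℝ)) ^ (1/α - 1) := Real.rpow_pos_of_pos (by positivity) _
  have hstep : (1/2) * (4*(t:ℝ)) ^ (1/α - 1) ≤ (1/2) * (c ^ (-(1/α)+1) / (-(1/α)+1)) := by
    rw [hcval]
    have : (4*(t:ℝ)) ^ (1/α - 1) ≤ (4*(t:ℝ)) ^ (1/α - 1) / (-(1/α)+1) := by
      rw [le_div_iff₀ hd0]; nlinarith
    linarith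
  linarith [hstep, hcomp, hlow, hsplit, hpos2]




private lemma part_two (hα : 1 < α) :
    Tendsto (fun t : ℕ =>
      ((∑' k : ℕ, ((k:ℝ)+1) ^ (-α) * (1 - ((k:ℝ)+1) ^ (-α)) ^ (2*t)) / (riemannZeta (α:ℂ)).re)
        * (α * (riemannZeta (α:ℂ)).re) /
        (∫ z in (0:ℝ)..1, z ^ ((1 - 1/α) - 1) * (1 - z) ^ ((1 + 2*(t:ℝ)) - 1)))
      atTop (nhds 1) := by
  have hα0 : (0:ℝ) < α := by linarith
  have hζ : 0 < (riemannZeta (α:ℂ)).re := zeta_re_pos hα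
  set ζr : ℝ := (riemannZeta (α:ℂ)).re with hζr
  set S : ℕ → ℝ := fun t => ∑' k : ℕ, ((k:ℝ)+1) ^ (-α) * (1 - ((k:ℝ)+1) ^ (-α)) ^ (2*t) with hS
  set I : ℕ → ℝ := fun t => ∫ x in Ioi (1:ℝ), x ^ (-α) * (1 - x ^ (-α)) ^ (2*t) with hI
  set D : ℕ → ℝ := fun t =>
    ∫ z in (0:ℝ)..1, z ^ ((1 - 1/α) - 1) * (1 - z) ^ ((1 + 2*(t:ℝ)) - 1) with hD
  have hDeq : ∀ t : ℕ, D t = ∫ z in (0:ℝ)..1, z ^ (-(1/α)) * (1-z) ^ (2*t) := by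
    intro t
    apply intervalIntegral.integral_congr
    intro z _
    have e1 : (1 - 1/α) - 1 = -(1/α) := by ring
    have e2 : (1 + 2*(t:ℝ)) - 1 = ((2*t : ℕ) : ℝ) := by push_cast; ring
    simp only [e1, e2, Real.rpow_natCast]
  have hDI : ∀ t : ℕ, D t = α * I t := by
    intro t
    rw [hDeq t, intervalIntegral.integral_of_le zero_le_one,
      MeasureTheory.integral_Ioc_eq_integral_Ioo, change_of_var (2*t) hα,
      MeasureTheory.integral_const_mul]
  have hDpos : ∀ t : ℕ, 1 ≤ t → 0 < D t := by
    intro t ht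
    rw [hDeq t]
    calc (0:ℝ) < (1/2) * (4*(t:ℝ)) ^ (1/α - 1) := by
          have : (0:ℝ) < (4*(t:ℝ)) ^ (1/α - 1) :=
            Real.rpow_pos_of_pos (by positivity) _
          linarith
      _ ≤ _ := beta_lb hα t ht
  set G : ℕ → ℝ := fun t => (2*α*(4:ℝ)^(1-1/α)) * (t:ℝ)^(-(1/α)) with hG
  have hG0 : Tendsto G atTop (nhds 0) := by
    have h1 : Tendsto (fun x : ℝ => x ^ (-(1/α))) atTop (nhds 0) :=
      tendsto_rpow_neg_atTop (by positivity)
    have h2 := (h1.comp tendsto_natCast_atTop_atTop).const_mul (2*α*(4:ℝ)^(1-1/α))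
    rw [mul_zero] at h2
    exact h2
  suffices h : Tendsto (fun t : ℕ => S t / ζr * (α * ζr) / D t - 1) atTop (nhds 0) by
    have h2 := h.add_const 1
    simp only [sub_add_cancel, zero_add] at h2
    exact h2
  refine squeeze_zero_norm' ?_ hG0
  filter_upwards [eventually_ge_atTop 1] with t ht
  have htR : (1:ℝ) ≤ (t:ℝ) := by exact_mod_cast ht
  have ht0 : (0:ℝ) < (t:ℝ) := by linarith
  have hDp := hDpos t ht
  have hnum : S t / ζr * (α * ζr) = α * S t := by
    field_simp
  have hsub : S t / ζr * (α * ζr) / D t - 1 = (α * S t - D t) / D t := by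
    rw [hnum, sub_div, div_self (ne_of_gt hDp)]
  rw [hsub, Real.norm_eq_abs, abs_div, abs_of_pos hDp]
  have hkey := sum_sub_integral (2*t) (by omega) hα
  have hnum_bound : |α * S t - D t| ≤ α / (t:ℝ) := by
    rw [hDI t, ← mul_sub, abs_mul, abs_of_pos hα0]
    have h1 : |S t - I t| ≤ 2 / (((2*t:ℕ):ℝ)+1) := hkey
    have h2 : 2 / (((2*t:ℕ):ℝ)+1) ≤ 1 / (t:ℝ) := by
      push_cast
      rw [div_le_div_iff₀ (by linarith) ht0]
      linarith
    calc α * |S t - I t| ≤ α * (1 / (t:ℝ)) := by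
          apply mul_le_mul_of_nonneg_left (le_trans h1 h2) hα0.le
      _ = α / (t:ℝ) := by ring
  have hDlb : (1/2) * (4*(t:ℝ)) ^ (1/α - 1) ≤ D t := by
    rw [hDeq t]; exact beta_lb hα t ht
  have hhalfpos : (0:ℝ) < (1/2) * (4*(t:ℝ)) ^ (1/α - 1) := by
    have : (0:ℝ) < (4*(t:ℝ)) ^ (1/α - 1) := Real.rpow_pos_of_pos (by positivity) _
    linarith
  have hchain : |α * S t - D t| / D t ≤ (α / (t:ℝ)) / ((1/2) * (4*(t:ℝ)) ^ (1/α - 1)) := by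
    apply div_le_div₀ (by positivity) hnum_bound hhalfpos hDlb
  refine le_trans hchain (le_of_eq ?_)
  have e1 : (4*(t:ℝ))^(1/α-1) = ((4*(t:ℝ))^(1-1/α))⁻¹ := by
    rw [← Real.rpow_neg (by positivity)]; ring_nf
  have e2 : (4*(t:ℝ))^(1-1/α) = (4:ℝ)^(1-1/α) * (t:ℝ)^(1-1/α) :=
    Real.mul_rpow (by norm_num) (by positivity)
  have e3 : (t:ℝ)^(1-1/α) = (t:ℝ) * (t:ℝ)^(-(1/α)) := by
    rw [show (1 - 1/α) = 1 + (-(1/α)) by ring, Real.rpow_add ht0, Real.rpow_one]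
  have h4 : (0:ℝ) < (4:ℝ)^(1-1/α) := Real.rpow_pos_of_pos (by norm_num) _
  have h5 : (0:ℝ) < (t:ℝ)^(-(1/α)) := Real.rpow_pos_of_pos ht0 _
  rw [e1, e2, e3, hG]
  field_simp

end GDProof

open Filter

/-- α > 1 case of the gradient-descent scaling law: for each fixed integer `t`,
`r_d(t) → r_∞(t)` as `d → ∞`, and `r_∞(t)` is asymptotically equivalent to
`B(1 − 1/α, 1 + 2t)/(α ζ(α))` as `t → ∞`. -/
theorem stmt10 (α : ℝ) (hα : 1 < α) :
    let H : ℕ → ℝ := fun d => ∑ k ∈ Finset.Icc 1 d, (k : ℝ) ^ (-α)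
    let r : ℕ → ℕ → ℝ := fun d t =>
      (∑ k ∈ Finset.Icc 1 d, (k : ℝ) ^ (-α) * (1 - (k : ℝ) ^ (-α)) ^ (2 * t)) / H d
    let rinf : ℕ → ℝ := fun t =>
      (∑' k : ℕ, ((k : ℝ) + 1) ^ (-α) * (1 - ((k : ℝ) + 1) ^ (-α)) ^ (2 * t)) /
        (riemannZeta (α : ℂ)).re
    (∀ t : ℕ, Tendsto (fun d : ℕ => r d t) atTop (nhds (rinf t))) ∧
    Tendsto
      (fun t : ℕ => rinf t * (α * (riemannZeta (α : ℂ)).re) /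
        (∫ z in (0 : ℝ)..1, z ^ ((1 - 1 / α) - 1) * (1 - z) ^ ((1 + 2 * (t : ℝ)) - 1)))
      atTop (nhds 1) := by
  intro H r rinf
  constructor
  · intro t
    exact part_one hα t
  · exact part_two hα
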